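/- For the Ising model on a finite graph G=(V,E) with ferromagnetic couplings J and no external field, for every A ⊆ V, the correlation ⟨σ_A⟩ equals (Σ_{n : ∂n = A} w(n)) / (Σ_{n : ∂n = ∅} w(n)), where the sums are over currents n ∈ ℕ₀^E. -/

import Mathlib

open scoped Classical BigOperators

def spin {V : Type*} (σ : V → Bool) (u : V) : ℝ := if σ u then 1 else -1

def curDeg {V E : Type*} [Fintype E] [DecidableEq V] (ep : E → V × V)
    (n : E → ℕ) (u : V) : ℕ :=
  ∑ e, n e * ((if (ep e).1 = u then 1 else 0) + (if (ep e).2 = u then 1 else 0))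

/-- The source set `∂n` of a current: vertices with odd incident current. -/
def curSources {V E : Type*} [Fintype V] [Fintype E] [DecidableEq V]
    (ep : E → V × V) (n : E → ℕ) : Finset V :=
  Finset.univ.filter fun u => Odd (curDeg ep n u)

noncomputable def curWt {E : Type*} [Fintype E] (J : E → ℝ) (n : E → ℕ) : ℝ :=
  ∏ e, J e ^ n e / (Nat.factorial (n e) : ℝ)

universe u
set_option maxHeartbeats 1000000 in

lemma pi_tsum_prod (E : Type u) [Finite E] :
    ∀ (_ : Fintype E) (f : E → ℕ → ℝ), (∀ e, Summable fun k => ‖f e k‖) →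
      Summable (fun n : E → ℕ => ‖∏ e, f e (n e)‖) ∧
        (∑' n : E → ℕ, ∏ e, f e (n e)) = ∏ e, ∑' k, f e k := by
  induction E using Finite.induction_empty_option with
  | of_equiv e ih =>
    intro inst f hf
    letI : Fintype _ := Fintype.ofEquiv _ e.symm
    set g := fun a k => f (e a) k with hg
    obtain ⟨S, T⟩ := ih inferInstance g fun a => hf (e a)
    set Φ : (_ → ℕ) ≃ (_ → ℕ) := e.arrowCongr (Equiv.refl ℕ) with hΦ
    have key : ∀ m, (∏ b, f b (Φ m b)) = ∏ a, g a (m a) := by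
      intro m
      rw [← e.prod_comp]
      exact Finset.prod_congr rfl fun a _ => by simp [hΦ, Equiv.arrowCongr, hg]
    have hcomp : ((fun n => ‖∏ b, f b (n b)‖) ∘ Φ) = fun m => ‖∏ a, g a (m a)‖ :=
      funext fun m => by rw [Function.comp_apply, key]
    refine ⟨Φ.summable_iff.mp (by rw [hcomp]; exact S), ?_⟩
    calc (∑' n : _ → ℕ, ∏ b, f b (n b)) = ∑' m, ∏ b, f b (Φ m b) := (Φ.tsum_eq _).symm
      _ = ∑' m, ∏ a, g a (m a) := tsum_congr key
      _ = ∏ a, ∑' k, g a k := T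
      _ = ∏ b, ∑' k, f b k := by simp only [hg]; exact e.prod_comp fun b => ∑' k, f b k
  | h_empty =>
    intro inst f hf
    have h1 : ∀ n : PEmpty → ℕ, (∏ e, f e (n e)) = 1 := fun n => by simp
    constructor
    · exact .of_finite
    · rw [tsum_eq_single default fun b hb => absurd (Subsingleton.elim b default) hb]
      simp [h1]
  | h_option ih =>
    rename_i α hα
    intro inst f hf
    obtain rfl := Subsingleton.elim inst (@instFintypeOption α hα)
    set g := fun a k => f (some a) k with hg
    obtain ⟨S, T⟩ := ih hα g fun a => hf (some a)
    have hn := hf none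
    have hS2 : Summable fun p : ℕ × (α → ℕ) => f none p.1 * ∏ a, g a (p.2 a) :=
      summable_mul_of_summable_norm hn S
    have hT2 : ((∑' k, f none k) * ∑' m : α → ℕ, ∏ a, g a (m a))
        = ∑' p : ℕ × (α → ℕ), f none p.1 * ∏ a, g a (p.2 a) :=
      tsum_mul_tsum_of_summable_norm hn S
    have hN2 : Summable fun p : ℕ × (α → ℕ) => ‖f none p.1 * ∏ a, g a (p.2 a)‖ := by
      have := summable_mul_of_summable_norm (f := fun k => ‖f none k‖)
        (g := fun m : α → ℕ => ‖∏ a, g a (m a)‖) (by simpa using hn) (by simpa using S)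
      simpa [norm_mul] using this
    set Φ : ℕ × (α → ℕ) ≃ (Option α → ℕ) :=
      { toFun := fun p o => o.elim p.1 p.2
        invFun := fun n => (n none, fun a => n (some a))
        left_inv := fun p => rfl
        right_inv := fun n => funext fun o => by cases o <;> rfl } with hΦ
    have key : ∀ p : ℕ × (α → ℕ), (∏ e, f e (Φ p e)) = f none p.1 * ∏ a, g a (p.2 a) := by
      intro p
      rw [Fintype.prod_option]
      rfl
    have hcomp : ((fun n : Option α → ℕ => ‖∏ e, f e (n e)‖) ∘ Φ)
        = fun p => ‖f none p.1 * ∏ a, g a (p.2 a)‖ :=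
      funext fun p => by rw [Function.comp_apply, key]
    refine ⟨Φ.summable_iff.mp (by rw [hcomp]; exact hN2), ?_⟩
    calc (∑' n : Option α → ℕ, ∏ e, f e (n e)) = ∑' p, ∏ e, f e (Φ p e) := (Φ.tsum_eq _).symm
      _ = ∑' p : ℕ × (α → ℕ), f none p.1 * ∏ a, g a (p.2 a) := tsum_congr key
      _ = (∑' k, f none k) * ∑' m : α → ℕ, ∏ a, g a (m a) := hT2.symm
      _ = (∑' k, f none k) * ∏ a, ∑' k, g a k := by rw [T]
      _ = ∏ e, ∑' k, f e k := by
          simp only [hg]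
          exact (Fintype.prod_option fun e => ∑' k, f e k).symm

lemma abs_spin {V : Type*} (σ : V → Bool) (u : V) : ‖spin σ u‖ = 1 := by
  unfold spin; split <;> simp

lemma abs_spin' {V : Type*} (σ : V → Bool) (u : V) : |spin σ u| = 1 := abs_spin σ u

lemma summable_norm_exp_term (c : ℝ) : Summable fun k : ℕ => ‖c ^ k / (Nat.factorial k : ℝ)‖ :=
  (Real.summable_pow_div_factorial |c|).congr fun k => by
    rw [Real.norm_eq_abs, abs_div, abs_pow, Nat.abs_cast]

lemma exp_tsum (x : ℝ) : Real.exp x = ∑' k : ℕ, x ^ k / (Nat.factorial k : ℝ) := by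
  rw [Real.exp_eq_exp_ℝ, NormedSpace.exp_eq_tsum_div]

lemma prod_spin_pow {V E : Type*} [Fintype V] [Fintype E] [DecidableEq V]
    (ep : E → V × V) (σ : V → Bool) (n : E → ℕ) :
    (∏ e, spin σ (ep e).1 ^ n e * spin σ (ep e).2 ^ n e)
      = ∏ u, spin σ u ^ curDeg ep n u := by
  unfold curDeg
  symm
  calc ∏ u, spin σ u ^ ∑ e, n e * ((if (ep e).1 = u then 1 else 0) + (if (ep e).2 = u then 1 else 0))
      = ∏ u, ∏ e, spin σ u ^ (n e * ((if (ep e).1 = u then 1 else 0) + (if (ep e).2 = u then 1 else 0))) :=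
        Finset.prod_congr rfl fun u _ => (Finset.prod_pow_eq_pow_sum _ _ _).symm
    _ = ∏ e, ∏ u, spin σ u ^ (n e * ((if (ep e).1 = u then 1 else 0) + (if (ep e).2 = u then 1 else 0))) :=
        Finset.prod_comm
    _ = ∏ e, spin σ (ep e).1 ^ n e * spin σ (ep e).2 ^ n e := by
        refine Finset.prod_congr rfl fun e _ => ?_
        have key : ∀ u, spin σ u ^ (n e * ((if (ep e).1 = u then 1 else 0) + (if (ep e).2 = u then 1 else 0)))
            = (if (ep e).1 = u then spin σ u ^ n e else 1) * (if (ep e).2 = u then spin σ u ^ n e else 1) := by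
          intro u; split_ifs <;> simp [mul_add, mul_two, pow_add]
        simp only [key, Finset.prod_mul_distrib, Finset.prod_ite_eq, Finset.mem_univ, if_true]

lemma sum_pi_bool {V : Type*} [Fintype V] [DecidableEq V] (h : V → Bool → ℝ) :
    ∑ σ : V → Bool, ∏ u, h u (σ u) = ∏ u, (h u true + h u false) := by
  have key := Finset.prod_univ_sum (fun _ : V => (Finset.univ : Finset Bool)) (fun u b => h u b)
  rw [Fintype.piFinset_univ] at key
  rw [← key]
  exact Finset.prod_congr rfl fun u _ => by simp [Fintype.sum_bool]

lemma sum_spin_pow {V : Type*} [Fintype V] [DecidableEq V] (m : V → ℕ) :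
    ∑ σ : V → Bool, ∏ u, spin σ u ^ m u = ∏ u, ((1 : ℝ) + (-1) ^ m u) := by
  calc ∑ σ : V → Bool, ∏ u, spin σ u ^ m u
      = ∑ σ : V → Bool, ∏ u, spin (fun _ => σ u) u ^ m u := rfl
    _ = ∏ u, (spin (fun _ => true) u ^ m u + spin (fun _ => false) u ^ m u) :=
        sum_pi_bool fun u b => spin (fun _ => b) u ^ m u
    _ = ∏ u, ((1 : ℝ) + (-1) ^ m u) := Finset.prod_congr rfl fun u _ => by simp [spin]

lemma one_add_neg_one_pow (m : ℕ) :
    (1 : ℝ) + (-1) ^ m = if Even m then 2 else 0 := by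
  by_cases h : Even m
  · rw [h.neg_one_pow, if_pos h]; norm_num
  · rw [(Nat.not_even_iff_odd.mp h).neg_one_pow, if_neg h]; norm_num

lemma sum_spin_exp {V E : Type*} [Fintype V] [DecidableEq V] [Fintype E]
    (ep : E → V × V) (J : E → ℝ) (hferro : ∀ e, 0 ≤ J e) (B : Finset V) :
    ∑ σ : V → Bool, (∏ u ∈ B, spin σ u) *
        Real.exp (∑ e, J e * spin σ (ep e).1 * spin σ (ep e).2)
      = 2 ^ Fintype.card V * ∑' n : {n : E → ℕ // curSources ep n = B}, curWt J n.1 := by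
  classical
  -- summability of weights
  have hWn : Summable fun n : E → ℕ => ‖curWt J n‖ := by
    unfold curWt
    exact (pi_tsum_prod E inferInstance (fun e k => J e ^ k / (Nat.factorial k : ℝ))
      (fun e => summable_norm_exp_term (J e))).1
  -- expand the exponential for each σ
  have hexp : ∀ σ : V → Bool,
      Real.exp (∑ e, J e * spin σ (ep e).1 * spin σ (ep e).2)
        = ∑' n : E → ℕ, curWt J n * ∏ u, spin σ u ^ curDeg ep n u := by
    intro σ
    set c : E → ℝ := fun e => J e * spin σ (ep e).1 * spin σ (ep e).2 with hc
    have h1 : Real.exp (∑ e, c e) = ∏ e, ∑' k : ℕ, c e ^ k / (Nat.factorial k : ℝ) := by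
      rw [Real.exp_sum]
      exact Finset.prod_congr rfl fun e _ => exp_tsum (c e)
    have h2 := (pi_tsum_prod E inferInstance (fun e k => c e ^ k / (Nat.factorial k : ℝ))
      (fun e => summable_norm_exp_term (c e))).2
    rw [h1, ← h2]
    refine tsum_congr fun n => ?_
    calc (∏ e, c e ^ n e / (Nat.factorial (n e) : ℝ))
        = ∏ e, (J e ^ n e / (Nat.factorial (n e) : ℝ)) *
            (spin σ (ep e).1 ^ n e * spin σ (ep e).2 ^ n e) :=
          Finset.prod_congr rfl fun e _ => by rw [hc, mul_pow, mul_pow]; ring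
      _ = curWt J n * ∏ e, spin σ (ep e).1 ^ n e * spin σ (ep e).2 ^ n e := by
          rw [Finset.prod_mul_distrib]; rfl
      _ = curWt J n * ∏ u, spin σ u ^ curDeg ep n u := by rw [prod_spin_pow]
  -- the summand as a function of (σ, n)
  set t : (V → Bool) → (E → ℕ) → ℝ := fun σ n =>
    (∏ u ∈ B, spin σ u) * (curWt J n * ∏ u, spin σ u ^ curDeg ep n u) with ht
  have hts : ∀ σ, Summable (t σ) := by
    intro σ
    refine Summable.of_norm_bounded hWn fun n => le_of_eq ?_
    show ‖(∏ u ∈ B, spin σ u) * (curWt J n * ∏ u, spin σ u ^ curDeg ep n u)‖ = ‖curWt J n‖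
    simp [norm_mul, norm_prod, norm_pow, abs_spin, abs_spin']
  -- interchange the finite sum and the series
  have step1 : ∑ σ : V → Bool, (∏ u ∈ B, spin σ u) *
      Real.exp (∑ e, J e * spin σ (ep e).1 * spin σ (ep e).2)
      = ∑' n : E → ℕ, ∑ σ : V → Bool, t σ n := by
    rw [Summable.tsum_finsetSum fun σ _ => hts σ]
    refine Finset.sum_congr rfl fun σ _ => ?_
    rw [hexp σ, ← tsum_mul_left]
  -- compute the inner sum over σ
  have step2 : ∀ n : E → ℕ, ∑ σ : V → Bool, t σ n
      = curWt J n * (if curSources ep n = B then (2 : ℝ) ^ Fintype.card V else 0) := by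
    intro n
    have h1 : ∀ σ : V → Bool, t σ n = curWt J n *
        ∏ u, spin σ u ^ ((if u ∈ B then 1 else 0) + curDeg ep n u) := by
      intro σ
      have hB : (∏ u ∈ B, spin σ u) = ∏ u, spin σ u ^ (if u ∈ B then 1 else 0) := by
        rw [← Fintype.prod_ite_mem B (spin σ)]
        exact Finset.prod_congr rfl fun u _ => by split_ifs <;> simp
      show (∏ u ∈ B, spin σ u) * (curWt J n * ∏ u, spin σ u ^ curDeg ep n u) = _
      rw [hB]
      simp only [pow_add]
      rw [Finset.prod_mul_distrib]
      ring
    simp only [h1, ← Finset.mul_sum]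
    congr 1
    have h2 : ∑ σ : V → Bool, ∏ u, spin σ u ^ ((if u ∈ B then 1 else 0) + curDeg ep n u)
        = ∏ u, ((1 : ℝ) + (-1) ^ ((if u ∈ B then 1 else 0) + curDeg ep n u)) := by
      exact sum_spin_pow fun u => (if u ∈ B then 1 else 0) + curDeg ep n u
    rw [h2]
    by_cases hsrc : curSources ep n = B
    · rw [if_pos hsrc]
      have heven : ∀ u : V, Even ((if u ∈ B then 1 else 0) + curDeg ep n u) := by
        intro u
        have hmem : u ∈ B ↔ Odd (curDeg ep n u) := by
          rw [← hsrc]; simp [curSources]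
        by_cases hu : u ∈ B
        · rw [if_pos hu]
          obtain ⟨k, hk⟩ := hmem.mp hu
          exact ⟨k + 1, by omega⟩
        · rw [if_neg hu]
          have : ¬ Odd (curDeg ep n u) := fun h => hu (hmem.mpr h)
          simpa using Nat.not_odd_iff_even.mp this
      calc ∏ u : V, ((1 : ℝ) + (-1) ^ ((if u ∈ B then 1 else 0) + curDeg ep n u))
          = ∏ _u : V, (2 : ℝ) := Finset.prod_congr rfl fun u _ => by
              rw [one_add_neg_one_pow, if_pos (heven u)]
        _ = 2 ^ Fintype.card V := by simp [Finset.prod_const, Finset.card_univ]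
    · rw [if_neg hsrc]
      have : ∃ u : V, ¬ Even ((if u ∈ B then 1 else 0) + curDeg ep n u) := by
        by_contra hall
        push_neg at hall
        apply hsrc
        ext u
        have h := hall u
        simp only [curSources, Finset.mem_filter, Finset.mem_univ, true_and]
        by_cases hu : u ∈ B
        · rw [if_pos hu] at h
          simp only [hu, iff_true]
          obtain ⟨r, hr⟩ := h
          exact ⟨r - 1, by omega⟩
        · rw [if_neg hu] at h
          simp only [hu, iff_false]
          rintro ⟨k, hk⟩
          obtain ⟨r, hr⟩ := h
          omega
      obtain ⟨u, hu⟩ := this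
      refine Finset.prod_eq_zero (Finset.mem_univ u) ?_
      rw [one_add_neg_one_pow, if_neg hu]
  -- sum over currents with fixed sources
  rw [step1]
  calc (∑' n : E → ℕ, ∑ σ : V → Bool, t σ n)
      = ∑' n : E → ℕ, Set.indicator {n : E → ℕ | curSources ep n = B}
          (fun n => (2 : ℝ) ^ Fintype.card V * curWt J n) n := by
        refine tsum_congr fun n => ?_
        rw [step2 n, Set.indicator_apply]
        by_cases hsrc : curSources ep n = B
        · simp only [Set.mem_setOf_eq, if_pos hsrc]
          ring
        · simp only [Set.mem_setOf_eq, if_neg hsrc]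
          ring
    _ = ∑' n : {n : E → ℕ // curSources ep n = B}, (2 : ℝ) ^ Fintype.card V * curWt J n.1 :=
        (tsum_subtype {n : E → ℕ | curSources ep n = B}
          (fun n => (2 : ℝ) ^ Fintype.card V * curWt J n)).symm
    _ = 2 ^ Fintype.card V * ∑' n : {n : E → ℕ // curSources ep n = B}, curWt J n.1 :=
        tsum_mul_left


/-- Random current representation of correlation functions:
`⟨σ_A⟩ = (Σ_{∂n = A} w(n)) / (Σ_{∂n = ∅} w(n))`. -/
theorem correlation_random_current {V E : Type*} [Fintype V] [DecidableEq V]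
    [Fintype E] (ep : E → V × V) (J : E → ℝ) (hferro : ∀ e, 0 ≤ J e) (A : Finset V) :
    (∑ σ : V → Bool, (∏ u ∈ A, spin σ u) *
        Real.exp (∑ e, J e * spin σ (ep e).1 * spin σ (ep e).2)) /
      (∑ σ : V → Bool, Real.exp (∑ e, J e * spin σ (ep e).1 * spin σ (ep e).2))
    = (∑' n : {n : E → ℕ // curSources ep n = A}, curWt J n.1) /
      (∑' n : {n : E → ℕ // curSources ep n = ∅}, curWt J n.1) := by
  have hden := sum_spin_exp ep J hferro ∅
  simp only [Finset.prod_empty, one_mul] at hden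
  rw [sum_spin_exp ep J hferro A, hden,
    mul_div_mul_left _ _ (by positivity : (2 : ℝ) ^ Fintype.card V ≠ 0)]
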